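/- Let v_j > v_k ≥ 0 be a consumer's values for the products of firms j and k, let p̄_j, p̄_k ≥ 0 be the firms' posted off-platform prices, and let u ≥ 0 be the consumer's best utility from all remaining firms. Define firm j's truthful second-price bid as b_j = max( min( p̄_j , v_j − max(u, v_k − p̄_k, 0) ), 0 ) and firm k's bid as b_k = max( min( p̄_k , v_k − max(u, v_j − p̄_j, 0) ), 0 ). Then b_j ≥ b_k. (In any bidding equilibrium of the data-augmented second-price auction, the firm for which the consumer has the higher value bids at least as much as any other firm, regardless of the posted prices; hence the sponsored-slot allocation is efficient.) -/
import Mathlib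


/-- In any bidding equilibrium of the data-augmented second-price
auction, the firm for which the consumer has the higher value bids at least as
much as any other firm, regardless of the posted prices. -/
theorem efficient_bidding
    (vj vk pbj pbk u : ℝ)
    (hvk : 0 ≤ vk) (hv : vk < vj)
    (hpj : 0 ≤ pbj) (hpk : 0 ≤ pbk) (hu : 0 ≤ u) :
    max (min pbk (vk - max u (max (vj - pbj) 0))) 0
      ≤ max (min pbj (vj - max u (max (vk - pbk) 0))) 0 := by
  set Mk := max u (max (vj - pbj) 0) with hMkdef
  set Mj := max u (max (vk - pbk) 0) with hMjdef
  have hMk1 : vj - pbj ≤ Mk := le_max_of_le_right (le_max_left _ _)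
  have hMku : u ≤ Mk := le_max_left _ _
  have h1 : vk - Mk ≤ pbj := by linarith
  have hminpbj : min pbk (vk - Mk) ≤ pbj := (min_le_right _ _).trans h1
  have h2 : min pbk (vk - Mk) ≤ vj - Mj := by
    rcases max_cases u (max (vk - pbk) 0) with ⟨h, _⟩ | ⟨h, _⟩
    · have := min_le_right pbk (vk - Mk)
      rw [hMjdef, h]; linarith
    · rcases max_cases (vk - pbk) (0 : ℝ) with ⟨h', _⟩ | ⟨h', _⟩
      · have := min_le_left pbk (vk - Mk)
        rw [hMjdef, h, h']; linarith
      · have hMk0 : (0:ℝ) ≤ Mk := le_max_of_le_right (le_max_right _ _)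
        have := min_le_right pbk (vk - Mk)
        rw [hMjdef, h, h']; linarith
  refine max_le ?_ (le_max_right _ _)
  exact le_max_of_le_left (le_min hminpbj h2)
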